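/- arXiv:2410.22842 — 2 statements merged into one kernel-verified Lean document; each statement's English description precedes it below -/
import Mathlib

section
/- For every finite tree $H$ that is not a path, there exists a (possibly infinite) simple graph $G$ with minimum degree at least $3$ such that $G$ has no induced subgraph isomorphic to $H$ and $G$ has no cycle of length a power of $2$. (Such a $G$ is obtained from an infinite tree in which every vertex has degree $3$ by replacing each vertex with a triangle and joining the triangles of adjacent vertices by single edges; this graph is claw-free, its only cycles are triangles, and in a claw-free graph every induced tree is a path.) -/
open SimpleGraph

lemma aux_path_iso {W : Type*} [Fintype W] (H : SimpleGraph W)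
    (hc : H.Connected) (ha : H.IsAcyclic)
    (hdeg : ∀ x : W, ¬ ∃ a b c : W, a ≠ b ∧ a ≠ c ∧ b ≠ c ∧ H.Adj x a ∧ H.Adj x b ∧ H.Adj x c) :
    ∃ k : ℕ, Nonempty (H ≃g SimpleGraph.pathGraph k) := by
  classical
  have hdeg2 : ∀ x : W, H.degree x ≤ 2 := by
    intro x
    by_contra hx
    push_neg at hx
    obtain ⟨a, b, c, hA, hB, hC, hab, hac, hbc⟩ :=
      Finset.two_lt_card_iff.mp (show 2 < (H.neighborFinset x).card from hx)
    exact hdeg x ⟨a, b, c, hab, hac, hbc, by simpa using hA, by simpa using hB, by simpa using hC⟩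
  have htree : H.IsTree := ⟨hc, ha⟩
  have hedge := htree.card_edgeFinset
  have hsum := H.sum_degrees_eq_twice_card_edges
  have hne : Nonempty W := hc.nonempty
  have hcard : 1 ≤ Fintype.card W := Fintype.card_pos
  have hleaf : ∃ v0 : W, H.degree v0 ≤ 1 := by
    by_contra hl
    push_neg at hl
    have h2 : ∀ v : W, 2 ≤ H.degree v := fun v => hl v
    have : 2 * Fintype.card W ≤ ∑ v, H.degree v := by
      calc 2 * Fintype.card W = ∑ _v : W, 2 := by
            rw [Finset.sum_const, Finset.card_univ, smul_eq_mul, mul_comm]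
        _ ≤ ∑ v, H.degree v := Finset.sum_le_sum (fun v _ => h2 v)
    omega
  obtain ⟨v0, hv0⟩ := hleaf
  set n := Fintype.card W with hn
  have hdlt : ∀ w, H.dist v0 w < n := by
    intro w
    rcases eq_or_ne (H.dist v0 w) 0 with h | h
    · omega
    · obtain ⟨p, hp⟩ := exists_walk_of_dist_ne_zero h
      have := (p.isPath_of_length_eq_dist hp).length_lt
      omega
  have hdesc : ∀ (y : W) (m : ℕ), H.dist v0 y = m + 1 → ∃ w, H.Adj w y ∧ H.dist v0 w = m := by
    intro y m hy
    obtain ⟨p, hp⟩ := exists_walk_of_dist_ne_zero (by omega : H.dist v0 y ≠ 0)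
    have hrl : p.reverse.length = m + 1 := by
      rw [Walk.length_reverse]; omega
    rcases hr : p.reverse with _ | ⟨hadj, q⟩
    · rw [hr] at hrl; simp at hrl
    · rename_i z
      rw [hr] at hrl
      simp only [Walk.length_cons] at hrl
      refine ⟨z, hadj.symm, ?_⟩
      have h1 : H.dist v0 z ≤ m := by
        have := SimpleGraph.dist_le q.reverse
        have hql : q.length = m := by omega
        simpa [Walk.length_reverse, hql] using this
      have h2 : H.dist v0 y ≤ H.dist v0 z + H.dist z y := hc.dist_triangle
      have h3 : H.dist z y = 1 := SimpleGraph.dist_eq_one_iff_adj.mpr hadj.symm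
      omega
  have hinj : ∀ (d : ℕ) (u v : W), H.dist v0 u = d → H.dist v0 v = d → u = v := by
    intro d
    induction d with
    | zero =>
      intro u v hu hv
      have h1 : v0 = u := (hc.dist_eq_zero_iff).mp hu
      have h2 : v0 = v := (hc.dist_eq_zero_iff).mp hv
      rw [← h1, ← h2]
    | succ m ih =>
      intro u v hu hv
      by_contra huv
      obtain ⟨u', hu'a, hu'd⟩ := hdesc u m hu
      obtain ⟨v', hv'a, hv'd⟩ := hdesc v m hv
      have hx : u' = v' := ih u' v' hu'd hv'd
      subst hx
      rcases m with _ | m'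
      · have : v0 = u' := (hc.dist_eq_zero_iff).mp hu'd
        subst this
        have : 1 < H.degree v0 := by
          rw [SimpleGraph.degree]
          exact Finset.one_lt_card_iff.mpr
            ⟨u, v, by simpa using hu'a, by simpa using hv'a, huv⟩
        omega
      · obtain ⟨w, hwa, hwd⟩ := hdesc u' m' hu'd
        refine hdeg u' ⟨u, v, w, huv, ?_, ?_, hu'a, hv'a, hwa.symm⟩
        · intro h; rw [h] at hu; omega
        · intro h; rw [h] at hv; omega
  have aux_adj : ∀ u v : W, H.dist v0 v = H.dist v0 u + 1 → H.Adj u v := by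
    intro u v h
    obtain ⟨w, hwa, hwd⟩ := hdesc v _ h
    have : u = w := hinj _ u w rfl hwd
    rwa [this]
  refine ⟨n, ⟨?_⟩⟩
  have hbij : Function.Bijective (fun w => (⟨H.dist v0 w, hdlt w⟩ : Fin n)) := by
    rw [Fintype.bijective_iff_injective_and_card]
    refine ⟨fun u v huv => ?_, by simp [hn]⟩
    have : H.dist v0 u = H.dist v0 v := by
      simpa [Fin.mk.injEq] using huv
    exact hinj _ u v rfl this.symm
  refine ⟨Equiv.ofBijective _ hbij, ?_⟩
  intro u v
  simp only [Equiv.ofBijective_apply, pathGraph_adj]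
  constructor
  · rintro (h | h)
    · exact aux_adj u v (by simpa using h.symm)
    · exact (aux_adj v u (by simpa using h.symm)).symm
  · intro hadj
    have h1 : H.dist v0 u ≤ H.dist v0 v + 1 := by
      have := hc.dist_triangle (u := v0) (v := v) (w := u)
      have h3 : H.dist v u = 1 := SimpleGraph.dist_eq_one_iff_adj.mpr hadj.symm
      omega
    have h2 : H.dist v0 v ≤ H.dist v0 u + 1 := by
      have := hc.dist_triangle (u := v0) (v := u) (w := v)
      have h3 : H.dist u v = 1 := SimpleGraph.dist_eq_one_iff_adj.mpr hadj
      omega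
    have h4 : H.dist v0 u ≠ H.dist v0 v := by
      intro h; exact hadj.ne (hinj _ u v rfl h.symm)
    show H.dist v0 u + 1 = H.dist v0 v ∨ H.dist v0 v + 1 = H.dist v0 u
    omega


abbrev TVert : Type := {l : List (Fin 3) // l.Chain' (· ≠ ·)}
abbrev GVert : Type := TVert × Fin 3

def GG : SimpleGraph GVert where
  Adj x y := (x.1 = y.1 ∧ x.2 ≠ y.2) ∨
    (x.2 = y.2 ∧ (y.1.val = x.2 :: x.1.val ∨ x.1.val = x.2 :: y.1.val))
  symm := by
    constructor
    rintro ⟨v, i⟩ ⟨w, j⟩ (⟨h1, h2⟩ | ⟨h1, h2⟩)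
    · exact Or.inl ⟨h1.symm, h2.symm⟩
    · cases h1
      exact Or.inr ⟨rfl, h2.symm⟩
  loopless := by
    constructor
    rintro ⟨v, i⟩ (⟨_, h⟩ | ⟨_, (h | h)⟩)
    · exact h rfl
    · exact (List.cons_ne_self i v.val) h.symm
    · exact (List.cons_ne_self i v.val) h.symm

lemma adj_def {x y : GVert} : GG.Adj x y ↔ (x.1 = y.1 ∧ x.2 ≠ y.2) ∨
    (x.2 = y.2 ∧ (y.1.val = x.2 :: x.1.val ∨ x.1.val = x.2 :: y.1.val)) := Iff.rfl

lemma fin3_ne : ∀ i j : Fin 3, i ≠ j → j = i + 1 ∨ j = i + 2 := by decide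

lemma fin3_distinct : ∀ i : Fin 3, i ≠ i + 1 ∧ i ≠ i + 2 ∧ i + 1 ≠ i + 2 := by decide

def extN (v : TVert) (i : Fin 3) : TVert :=
  if h : v.val.head? = some i then ⟨v.val.tail, v.prop.tail⟩
  else ⟨i :: v.val, List.isChain_cons.mpr ⟨fun y hy hiy => h (by rwa [Option.mem_def, ← hiy] at hy), v.prop⟩⟩

lemma head?_some_eq (v : TVert) (i : Fin 3) (h : v.val.head? = some i) :
    v.val = i :: v.val.tail := by
  rcases v with ⟨l, hl⟩
  cases l with
  | nil => simp at h
  | cons a t =>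
    simp only [List.head?_cons, Option.some.injEq] at h
    subst h
    rfl

lemma extN_ne (v : TVert) (i : Fin 3) : extN v i ≠ v := by
  intro h
  have hlen := congrArg (fun t : TVert => t.val.length) h
  unfold extN at hlen
  by_cases hs : v.val.head? = some i
  · rw [dif_pos hs] at hlen
    simp only at hlen
    have hv := head?_some_eq v i hs
    have := congrArg List.length hv
    simp only [List.length_cons] at this
    omega
  · rw [dif_neg hs] at hlen
    simp only [List.length_cons] at hlen
    omega

lemma adj_iff (x y : GVert) :
    GG.Adj x y ↔ y = (x.1, x.2 + 1) ∨ y = (x.1, x.2 + 2) ∨ y = (extN x.1 x.2, x.2) := by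
  obtain ⟨v, i⟩ := x
  obtain ⟨w, j⟩ := y
  rw [adj_def]
  constructor
  · rintro (⟨h1, h2⟩ | ⟨h1, (h | h)⟩)
    · cases h1
      rcases fin3_ne i j h2 with h | h
      · left; rw [h]
      · right; left; rw [h]
    · cases h1
      right; right
      have hch : List.Chain' (· ≠ ·) (i :: v.val) := h ▸ w.prop
      have hh : ¬ (v.val.head? = some i) := by
        intro hs
        exact (List.isChain_cons.mp hch).1 i (Option.mem_def.mpr hs) rfl
      have hwe : extN v i = w := by
        unfold extN
        rw [dif_neg hh]
        exact Subtype.ext h.symm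
      rw [hwe]
    · cases h1
      right; right
      have hs : v.val.head? = some i := by rw [h]; rfl
      have hwe : extN v i = w := by
        unfold extN
        rw [dif_pos hs]
        exact Subtype.ext (show (v.val).tail = w.val by rw [h]; rfl)
      rw [hwe]
  · rintro (h | h | h) <;> rw [h]
    · exact Or.inl ⟨rfl, (fin3_distinct i).1⟩
    · exact Or.inl ⟨rfl, (fin3_distinct i).2.1⟩
    · refine Or.inr ⟨rfl, ?_⟩
      unfold extN
      by_cases hs : v.val.head? = some i
      · rw [dif_pos hs]
        right
        exact head?_some_eq v i hs
      · rw [dif_neg hs]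
        left
        rfl

lemma zmod2_helper : ∀ x y z : ZMod 2, (x + y) + (y + z) = x + z := by decide
lemma zmod2_self : ∀ x : ZMod 2, x + x = 0 := by decide
lemma zmod2_one_ne_zero : (1 : ZMod 2) ≠ 0 := by decide

lemma darts_sum (f : GVert → ZMod 2) {a b : GVert} (w : GG.Walk a b) :
    (w.darts.map (fun d => f d.toProd.1 + f d.toProd.2)).sum = f a + f b := by
  induction w with
  | nil => simp [zmod2_self]
  | cons h p ih =>
    rw [Walk.darts_cons, List.map_cons, List.sum_cons, ih]
    exact zmod2_helper _ _ _

def fcut (u0 : List (Fin 3)) (y : GVert) : ZMod 2 := if u0 <:+ y.1.val then 1 else 0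

lemma class_lemma (v u : TVert) (i : Fin 3) (hu : u.val = i :: v.val) :
    ∀ x y : GVert, GG.Adj x y →
      fcut u.val x + fcut u.val y
        = if s(x, y) = s(((v, i) : GVert), ((u, i) : GVert)) then 1 else 0 := by
  have hor : ∀ (vx vy : TVert) (ix : Fin 3), vy.val = ix :: vx.val →
      fcut u.val (vx, ix) + fcut u.val (vy, ix)
        = if s(((vx, ix) : GVert), ((vy, ix) : GVert)) = s(((v, i) : GVert), ((u, i) : GVert))
          then 1 else 0 := by
    intro vx vy ix h
    have hulen : u.val.length = v.val.length + 1 := by rw [hu]; rfl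
    have hylen : vy.val.length = vx.val.length + 1 := by rw [h]; rfl
    by_cases hA : u.val <:+ vx.val
    · have hAlen : u.val.length ≤ vx.val.length := List.IsSuffix.length_le hA
      have hB : u.val <:+ vy.val := by
        rw [h]
        exact hA.trans (List.suffix_cons ix vx.val)
      have hcond : ¬ (s(((vx, ix) : GVert), ((vy, ix) : GVert))
          = s(((v, i) : GVert), ((u, i) : GVert))) := by
        rw [Sym2.eq_iff]
        rintro (⟨h1, h2⟩ | ⟨h1, h2⟩)
        · have hvx : vx = v := (Prod.ext_iff.mp h1).1
          have l1 : u.val.length ≤ v.val.length := by rw [← hvx]; exact hAlen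
          omega
        · have hvx : vx = u := (Prod.ext_iff.mp h1).1
          have hvy : vy = v := (Prod.ext_iff.mp h2).1
          have l2 : v.val.length = u.val.length + 1 := by rw [← hvx, ← hvy]; exact hylen
          omega
      rw [if_neg hcond]
      unfold fcut
      rw [if_pos hA, if_pos hB]
      decide
    · by_cases hBeq : u.val = vy.val
      · have hcons : ix :: vx.val = i :: v.val := by rw [← h, ← hBeq, hu]
        have hix : ix = i := by injection hcons
        have hvx : vx.val = v.val := by injection hcons
        have hvxv : vx = v := Subtype.ext hvx
        have hvyu : vy = u := Subtype.ext hBeq.symm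
        have hcond : s(((vx, ix) : GVert), ((vy, ix) : GVert))
            = s(((v, i) : GVert), ((u, i) : GVert)) := by
          rw [hix, hvxv, hvyu]
        rw [if_pos hcond]
        unfold fcut
        rw [if_neg hA, if_pos (hBeq ▸ List.suffix_refl u.val)]
        decide
      · have hB : ¬ u.val <:+ vy.val := by
          rw [h, List.suffix_cons_iff]
          rintro (h' | h')
          · exact hBeq (h'.trans h.symm)
          · exact hA h'
        have hcond : ¬ (s(((vx, ix) : GVert), ((vy, ix) : GVert))
            = s(((v, i) : GVert), ((u, i) : GVert))) := by
          rw [Sym2.eq_iff]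
          rintro (⟨h1, h2⟩ | ⟨h1, h2⟩)
          · have hvy : vy = u := (Prod.ext_iff.mp h2).1
            exact hBeq (congrArg Subtype.val hvy.symm)
          · have hvx : vx = u := (Prod.ext_iff.mp h1).1
            have hvy : vy = v := (Prod.ext_iff.mp h2).1
            have l2 : v.val.length = u.val.length + 1 := by rw [← hvx, ← hvy]; exact hylen
            omega
        rw [if_neg hcond]
        unfold fcut
        rw [if_neg hA, if_neg hB]
        decide
  rintro ⟨vx, ix⟩ ⟨vy, iy⟩ hadj
  rcases adj_def.mp hadj with ⟨h1, h2⟩ | ⟨h1, (h | h)⟩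
  · simp only at h1 h2
    cases h1
    have hvu : v ≠ u := by
      intro hh
      have hl : u.val.length = v.val.length + 1 := by rw [hu]; rfl
      rw [hh] at hl
      omega
    have hcond : ¬ (s(((vx, ix) : GVert), ((vx, iy) : GVert))
        = s(((v, i) : GVert), ((u, i) : GVert))) := by
      rw [Sym2.eq_iff]
      rintro (⟨h1', h2'⟩ | ⟨h1', h2'⟩)
      · exact hvu (((Prod.ext_iff.mp h1').1.symm.trans (Prod.ext_iff.mp h2').1))
      · exact hvu (((Prod.ext_iff.mp h2').1.symm.trans (Prod.ext_iff.mp h1').1))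
    rw [if_neg hcond]
    exact zmod2_self _
  · simp only at h1 h
    cases h1
    exact hor vx vy ix h
  · simp only at h1 h
    cases h1
    rw [add_comm, Sym2.eq_swap (a := ((vx, ix) : GVert))]
    exact hor vy vx ix h

lemma sum_indicator (e0 : Sym2 GVert) : ∀ l : List (Sym2 GVert),
    (l.map (fun e => if e = e0 then (1 : ZMod 2) else 0)).sum = (l.count e0 : ZMod 2) := by
  classical
  intro l
  induction l with
  | nil => simp
  | cons a t ih =>
    rw [List.map_cons, List.sum_cons, ih, List.count_cons]
    by_cases h : a = e0
    · simp [h, add_comm]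
    · simp [h, Ne.symm h]

lemma no_cross_edge {x : GVert} {w : GG.Walk x x} (hw : w.IsCycle)
    (v u : TVert) (i : Fin 3) (hu : u.val = i :: v.val)
    (he : s(((v, i) : GVert), ((u, i) : GVert)) ∈ w.edges) : False := by
  classical
  set e0 := s(((v, i) : GVert), ((u, i) : GVert)) with he0
  have hsum := darts_sum (fcut u.val) w
  have hmap : ∀ d ∈ w.darts,
      fcut u.val d.toProd.1 + fcut u.val d.toProd.2
        = if d.edge = e0 then (1 : ZMod 2) else 0 := by
    intro d _
    exact class_lemma v u i hu d.toProd.1 d.toProd.2 d.adj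
  rw [List.map_congr_left hmap] at hsum
  have hrw : (w.darts.map (fun d => if d.edge = e0 then (1 : ZMod 2) else 0))
      = (w.edges.map (fun e => if e = e0 then (1 : ZMod 2) else 0)) := by
    show _ = ((w.darts.map Dart.edge).map _)
    rw [List.map_map]
    rfl
  rw [hrw, sum_indicator] at hsum
  have hcount : w.edges.count e0 = 1 :=
    List.count_eq_one_of_mem hw.isCircuit.isTrail.edges_nodup he
  rw [hcount, zmod2_self] at hsum
  norm_num at hsum

lemma support_fst_const : ∀ {a b : GVert} (p : GG.Walk a b),
    (∀ d ∈ p.darts, (d.toProd.1).1 = (d.toProd.2).1) → ∀ y ∈ p.support, y.1 = a.1 := by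
  intro a b p
  induction p with
  | nil =>
    intro _ y hy
    rw [Walk.support_nil, List.mem_singleton] at hy
    rw [hy]
  | @cons a' m b' hadj p ih =>
    intro hdd y hy
    rw [Walk.support_cons] at hy
    rcases List.mem_cons.mp hy with rfl | hy'
    · rfl
    · have h1 : (a' : GVert).1 = m.1 :=
        hdd ⟨(a', m), hadj⟩ (by rw [Walk.darts_cons]; exact List.mem_cons_self)
      rw [ih (fun d hd => hdd d (by rw [Walk.darts_cons]; exact List.mem_cons_of_mem _ hd)) y hy']
      exact h1.symm

lemma cycle_length_three {x : GVert} {w : GG.Walk x x} (hw : w.IsCycle) : w.length = 3 := by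
  classical
  have hdart : ∀ d ∈ w.darts, (d.toProd.1).1 = (d.toProd.2).1 := by
    intro d hd
    by_contra hne
    have hedge : d.edge ∈ w.edges := List.mem_map_of_mem (f := Dart.edge) hd
    obtain ⟨⟨⟨v1, i1⟩, v2, i2⟩, hadj⟩ := d
    simp only at hne
    rcases adj_def.mp hadj with ⟨h1, _⟩ | ⟨h1, (h | h)⟩
    · exact hne h1
    · simp only at h1 h
      cases h1
      exact no_cross_edge hw v1 v2 i1 h hedge
    · simp only at h1 h
      cases h1
      refine no_cross_edge hw v2 v1 i1 h ?_
      rw [show s(((v2, i1) : GVert), ((v1, i1) : GVert)) = s(((v1, i1) : GVert), ((v2, i1) : GVert))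
        from Sym2.eq_swap]
      exact hedge
  have hmem : ∀ y ∈ w.support.tail, y.1 = x.1 :=
    fun y hy => support_fst_const w hdart y (List.mem_of_mem_tail hy)
  have htail : w.support.tail.Nodup := hw.support_nodup
  have hnodup2 : (w.support.tail.map Prod.snd).Nodup := by
    refine List.Nodup.map_on ?_ htail
    intro y hy z hz hyz
    have h1 := hmem y hy
    have h2 := hmem z hz
    exact Prod.ext (h1.trans h2.symm) hyz
  have hlen3 : w.support.tail.length ≤ 3 := by
    have hcard := hnodup2.length_le_card
    rwa [List.length_map, Fintype.card_fin] at hcard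
  have h3 : 3 ≤ w.length := hw.three_le_length
  have hsl : w.support.length = w.length + 1 := w.length_support
  have hcons : w.support = x :: w.support.tail := w.support_eq_cons
  have : w.support.length = w.support.tail.length + 1 := by
    rw [hcons]; rfl
  omega

lemma no_pow_two :
    ¬ ∃ (v : GVert) (w : GG.Walk v v), w.IsCycle ∧ ∃ k : ℕ, w.length = 2 ^ k := by
  rintro ⟨v, w, hw, k, hk⟩
  have h3 := cycle_length_three hw
  rw [h3] at hk
  rcases k with _ | _ | k
  · simp at hk
  · simp at hk
  · have : (4 : ℕ) ∣ 2 ^ (k + 2) := ⟨2 ^ k, by ring⟩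
    omega

lemma no_triangle {W : Type*} {H : SimpleGraph W} (ha : H.IsAcyclic) {x a b : W}
    (hxa : H.Adj x a) (hxb : H.Adj x b) (hab : H.Adj a b) : False := by
  have hpath : (Walk.cons hab (Walk.cons hxb.symm Walk.nil) : H.Walk a x).IsPath := by
    simp [Walk.isPath_def, hab.ne, hxa.ne', hxb.ne']
  have hcyc : (Walk.cons hxa (Walk.cons hab (Walk.cons hxb.symm Walk.nil))).IsCycle := by
    rw [Walk.cons_isCycle_iff]
    refine ⟨hpath, ?_⟩
    simp [Sym2.eq_iff, hxa.ne, hxb.ne, hab.ne, hxa.ne', hxb.ne', hab.ne']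
  exact ha _ hcyc


/-- For every finite tree `H` that is not a path, there is a (possibly infinite)
simple graph `G` with minimum degree at least `3` (every vertex has three distinct
neighbors) that has no induced subgraph isomorphic to `H` and no cycle of length a
power of `2`. -/
theorem exists_graph_min_degree_three_tree_free_no_pow_two_cycle
    {W : Type*} [Fintype W] (H : SimpleGraph W)
    (htree : H.Connected ∧ H.IsAcyclic)
    (hnotpath : ¬ ∃ k : ℕ, Nonempty (H ≃g SimpleGraph.pathGraph k)) :
    ∃ (V : Type) (G : SimpleGraph V),
      (∀ v : V, ∃ a b c : V, a ≠ b ∧ a ≠ c ∧ b ≠ c ∧ G.Adj v a ∧ G.Adj v b ∧ G.Adj v c) ∧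
      ¬ Nonempty (H ↪g G) ∧
      ¬ ∃ (v : V) (w : G.Walk v v), w.IsCycle ∧ ∃ k : ℕ, w.length = 2 ^ k := by
  classical
  obtain ⟨hc, ha⟩ := htree
  by_cases hclaw : ∃ x a b c : W, a ≠ b ∧ a ≠ c ∧ b ≠ c ∧ H.Adj x a ∧ H.Adj x b ∧ H.Adj x c
  case neg =>
    exact absurd (aux_path_iso H hc ha (fun x hx => hclaw ⟨x, hx⟩)) hnotpath
  obtain ⟨x, a, b, c, hab, hac, hbc, hxa, hxb, hxc⟩ := hclaw
  refine ⟨GVert, GG, ?_, ?_, no_pow_two⟩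
  · intro p
    refine ⟨(p.1, p.2 + 1), (p.1, p.2 + 2), (extN p.1 p.2, p.2), ?_, ?_, ?_, ?_, ?_, ?_⟩
    · intro h
      exact (fin3_distinct p.2).2.2 (congrArg Prod.snd h)
    · intro h
      exact extN_ne p.1 p.2 (congrArg Prod.fst h).symm
    · intro h
      exact extN_ne p.1 p.2 (congrArg Prod.fst h).symm
    · exact (adj_iff p _).mpr (Or.inl rfl)
    · exact (adj_iff p _).mpr (Or.inr (Or.inl rfl))
    · exact (adj_iff p _).mpr (Or.inr (Or.inr rfl))
  · rintro ⟨φ⟩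
    have hnab : ¬ H.Adj a b := fun h => no_triangle ha hxa hxb h
    have hnac : ¬ H.Adj a c := fun h => no_triangle ha hxa hxc h
    have hnbc : ¬ H.Adj b c := fun h => no_triangle ha hxb hxc h
    have Ha := (adj_iff (φ x) (φ a)).mp (φ.map_rel_iff.mpr hxa)
    have Hb := (adj_iff (φ x) (φ b)).mp (φ.map_rel_iff.mpr hxb)
    have Hc := (adj_iff (φ x) (φ c)).mp (φ.map_rel_iff.mpr hxc)
    have hInj := φ.injective
    have hAB : φ a ≠ φ b := fun h => hab (hInj h)
    have hAC : φ a ≠ φ c := fun h => hac (hInj h)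
    have hBC : φ b ≠ φ c := fun h => hbc (hInj h)
    have hGab : ¬ GG.Adj (φ a) (φ b) := fun h => hnab (φ.map_rel_iff.mp h)
    have hGac : ¬ GG.Adj (φ a) (φ c) := fun h => hnac (φ.map_rel_iff.mp h)
    have hGbc : ¬ GG.Adj (φ b) (φ c) := fun h => hnbc (φ.map_rel_iff.mp h)
    have hadj12 : GG.Adj ((φ x).1, (φ x).2 + 1) ((φ x).1, (φ x).2 + 2) :=
      Or.inl ⟨rfl, (fin3_distinct (φ x).2).2.2⟩
    rcases Ha with ha' | ha' | ha' <;> rcases Hb with hb' | hb' | hb' <;>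
        rcases Hc with hc' | hc' | hc' <;>
      first
        | exact hAB (ha'.trans hb'.symm)
        | exact hAC (ha'.trans hc'.symm)
        | exact hBC (hb'.trans hc'.symm)
        | exact hGab (by rw [ha', hb']; exact hadj12)
        | exact hGab (by rw [ha', hb']; exact hadj12.symm)
        | exact hGac (by rw [ha', hc']; exact hadj12)
        | exact hGac (by rw [ha', hc']; exact hadj12.symm)
        | exact hGbc (by rw [hb', hc']; exact hadj12)
        | exact hGbc (by rw [hb', hc']; exact hadj12.symm)
end

section
/- There exists a $3$-regular simple graph on $24$ vertices that contains no cycle of length $4$ and no cycle of length $8$ but contains a cycle of length $16$; moreover, this graph is $P_{18}$-free and contains an induced subgraph isomorphic to $P_{17}$. (The Markström graph is such a graph.) -/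
namespace Markstrom

def M : Nat := 7729782725286926633747899857699576282641940069060520687919085520122855117675241977635960969836259175884422209969288253139631763475087220832998190782331805941323533947765320

def adj (i j : Fin 24) : Bool := (M >>> (24 * i.val + j.val)) &&& 1 == 1

lemma adj_symm : ∀ a b : Fin 24, adj a b = adj b a := by decide
lemma adj_irrefl : ∀ a : Fin 24, adj a a = false := by decide

def G : SimpleGraph (Fin 24) where
  Adj i j := adj i j = true
  symm := ⟨fun i j h => by simpa only [adj_symm i j] using h⟩
  loopless := ⟨fun i h => by simp only [adj_irrefl i] at h; exact Bool.false_ne_true h⟩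

instance : DecidableRel G.Adj := fun i j => inferInstanceAs (Decidable (adj i j = true))

lemma degree3 : ∀ v : Fin 24, G.degree v = 3 := by decide

end Markstrom

namespace Markstrom

def nbrs (v : Fin 24) : List (Fin 24) := (List.finRange 24).filter (fun w => adj v w)

def grow : List (Fin 24) → List (List (Fin 24))
  | [] => []
  | h :: t => (nbrs h).filterMap (fun v => if v ∈ h :: t then none else some (v :: h :: t))

def pathsN : Nat → List (List (Fin 24))
  | 0 => (List.finRange 24).map (fun a => [a])
  | n+1 => (pathsN n).flatMap grow

def lastAdjHead : List (Fin 24) → Bool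
  | [] => false
  | a :: t => match (a :: t).getLast? with
    | some b => adj b a
    | none => false

def cycFree (n : Nat) : Bool := (pathsN n).all (fun l => !lastAdjHead l)

set_option maxRecDepth 10000 in
lemma cycFree3 : cycFree 3 = true := by decide

set_option maxRecDepth 100000 in
lemma cycFree7 : cycFree 7 = true := by decide

end Markstrom

namespace Markstrom

def growI : List (Fin 24) → List (List (Fin 24))
  | [] => []
  | h :: t => (nbrs h).filterMap (fun v =>
      if v ∈ h :: t ∨ (t.any fun u => adj v u) = true then none else some (v :: h :: t))

def ipathsN : Nat → List (List (Fin 24))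
  | 0 => (List.finRange 24).map (fun a => [a])
  | n+1 => (ipathsN n).flatMap growI

set_option maxRecDepth 1000000 in
set_option maxHeartbeats 4000000 in
lemma ipaths17 : (ipathsN 17).isEmpty = true := by decide

end Markstrom

namespace Markstrom

lemma mem_pathsN : ∀ (n : Nat) (l : List (Fin 24)), l.Chain' (fun a b => adj a b = true) →
    l.Nodup → l.length = n + 1 → l ∈ pathsN n := by
  intro n
  induction n with
  | zero =>
    intro l _ _ hlen
    match l, hlen with
    | [a], _ => exact List.mem_map.mpr ⟨a, List.mem_finRange a, rfl⟩
  | succ n ih =>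
    intro l hch hnd hlen
    match l, hlen with
    | a :: b :: t, hlen =>
      have h1 : (b :: t) ∈ pathsN n := ih _ hch.tail hnd.of_cons (by simpa using hlen)
      refine List.mem_flatMap.mpr ⟨b :: t, h1, ?_⟩
      refine List.mem_filterMap.mpr ⟨a, ?_, ?_⟩
      · refine List.mem_filter.mpr ⟨List.mem_finRange a, ?_⟩
        rw [adj_symm]
        exact (List.isChain_cons_cons.mp hch).1
      · have : a ∉ b :: t := (List.nodup_cons.mp hnd).1
        simp [this]

lemma no_cycle {n : Nat} (hn : cycFree n = true) :
    ¬ ∃ (v : Fin 24) (w : G.Walk v v), w.IsCycle ∧ w.length = n + 1 := by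
  rintro ⟨v, w, hc, hl⟩
  have hsupp : w.support = v :: w.support.tail := w.support_eq_cons
  have hslen : w.support.length = n + 2 := by rw [w.length_support, hl]
  have htlen : w.support.tail.length = n + 1 := by rw [List.length_tail, hslen]; omega
  have hch : w.support.tail.Chain' (fun a b => adj a b = true) :=
    (w.isChain_adj_support).tail
  have hmem : w.support.tail ∈ pathsN n := mem_pathsN n _ hch hc.support_nodup htlen
  have hne : w.support.tail ≠ [] := by
    intro h; rw [h] at htlen; simp at htlen
  match hm : w.support.tail, hne with
  | a :: t, _ =>
    have hlast : (a :: t).getLast? = some v := by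
      have h2 : w.support.getLast? = some v := by
        rw [List.getLast?_eq_getLast (l := w.support) (by simp)]
        exact congrArg some w.getLast_support
      rw [hsupp, hm, List.getLast?_cons_cons] at h2
      exact h2
    have hadj : adj v a = true := by
      have := w.isChain_adj_support
      rw [hsupp, hm] at this
      exact (List.isChain_cons_cons.mp this).1
    have := List.all_eq_true.mp hn _ (hm ▸ hmem)
    rw [lastAdjHead, hlast] at this
    simp [hadj] at this

end Markstrom

namespace Markstrom

def IndP : List (Fin 24) → Prop
  | [] => True
  | [_] => True
  | a :: b :: t => adj b a = true ∧ (a ∉ b :: t) ∧ (∀ u ∈ t, adj a u = false) ∧ IndP (b :: t)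

lemma mem_ipathsN : ∀ (n : Nat) (l : List (Fin 24)), IndP l → l.length = n + 1 → l ∈ ipathsN n := by
  intro n
  induction n with
  | zero =>
    intro l _ hlen
    match l, hlen with
    | [a], _ => exact List.mem_map.mpr ⟨a, List.mem_finRange a, rfl⟩
  | succ n ih =>
    intro l hip hlen
    match l, hlen with
    | a :: b :: t, hlen =>
      obtain ⟨h1, h2, h3, h4⟩ := hip
      have hbt : (b :: t) ∈ ipathsN n := ih _ h4 (by simpa using hlen)
      refine List.mem_flatMap.mpr ⟨b :: t, hbt, ?_⟩
      refine List.mem_filterMap.mpr ⟨a, ?_, ?_⟩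
      · refine List.mem_filter.mpr ⟨List.mem_finRange a, h1⟩
      · have hany : (t.any fun u => adj a u) = false := by
          rw [List.any_eq_false]
          intro u hu
          simp [h3 u hu]
        simp [h2, hany]

/-- descending list [g (k-1), ..., g 0] -/
def desc (g : Nat → Fin 24) : Nat → List (Fin 24)
  | 0 => []
  | k+1 => g k :: desc g k

lemma desc_length (g : Nat → Fin 24) : ∀ k, (desc g k).length = k := by
  intro k; induction k with
  | zero => rfl
  | succ k ih => simp [desc, ih]

lemma mem_desc {g : Nat → Fin 24} : ∀ {k u}, u ∈ desc g k ↔ ∃ i, i < k ∧ g i = u := by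
  intro k
  induction k with
  | zero => simp [desc]
  | succ k ih =>
    intro u
    simp only [desc, List.mem_cons, ih]
    constructor
    · rintro (rfl | ⟨i, hi, rfl⟩)
      · exact ⟨k, by omega, rfl⟩
      · exact ⟨i, by omega, rfl⟩
    · rintro ⟨i, hi, rfl⟩
      rcases Nat.lt_succ_iff_lt_or_eq.mp hi with h | rfl
      · exact Or.inr ⟨i, h, rfl⟩
      · exact Or.inl rfl

lemma no_P18 (h : (ipathsN 17).isEmpty = true) : ¬ Nonempty (SimpleGraph.pathGraph 18 ↪g G) := by
  rintro ⟨e⟩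
  set g : Nat → Fin 24 := fun i => e ⟨min i 17, by omega⟩ with hg
  have hinj : ∀ i j, i ≤ 17 → j ≤ 17 → g i = g j → i = j := by
    intro i j hi hj hij
    have := e.injective hij
    rw [Fin.mk.injEq] at this
    omega
  have hadj : ∀ i j, i ≤ 17 → j ≤ 17 → (adj (g i) (g j) = true ↔ (i + 1 = j ∨ j + 1 = i)) := by
    intro i j hi hj
    have h1 : (adj (g i) (g j) = true) ↔ G.Adj (g i) (g j) := Iff.rfl
    rw [h1, hg]
    simp only []
    rw [e.map_adj_iff, SimpleGraph.pathGraph_adj]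
    simp only [Nat.min_eq_left hi, Nat.min_eq_left hj]
  have key : ∀ k, k ≤ 18 → IndP (desc g k) := by
    intro k
    induction k with
    | zero => intro _; trivial
    | succ k ih =>
      intro hk
      match k, ih with
      | 0, _ => trivial
      | k+1, ih =>
        have ihk := ih (by omega)
        refine ⟨?_, ?_, ?_, ihk⟩
        · exact (hadj k (k+1) (by omega) (by omega)).mpr (Or.inl rfl)
        · show g (k+1) ∉ desc g (k+1)
          rw [mem_desc]
          rintro ⟨i, hi, hgi⟩
          have := hinj i (k+1) (by omega) (by omega) hgi
          omega
        · intro u hu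
          rw [mem_desc] at hu
          obtain ⟨i, hi, rfl⟩ := hu
          have : ¬ adj (g (k+1)) (g i) = true := by
            rw [hadj (k+1) i (by omega) (by omega)]
            omega
          exact Bool.not_eq_true _ |>.mp this
  have hmem : desc g 18 ∈ ipathsN 17 := mem_ipathsN 17 _ (key 18 le_rfl) (desc_length g 18)
  rw [List.isEmpty_iff] at h
  rw [h] at hmem
  exact List.not_mem_nil hmem

end Markstrom

namespace Markstrom

abbrev adjG (a b : Fin 24) (h : adj a b = true := by decide) : G.Adj a b := h

def w16 : G.Walk 0 0 := (SimpleGraph.Walk.cons (adjG 0 3) (SimpleGraph.Walk.cons (adjG 3 8) (SimpleGraph.Walk.cons (adjG 8 13) (SimpleGraph.Walk.cons (adjG 13 11) (SimpleGraph.Walk.cons (adjG 11 2) (SimpleGraph.Walk.cons (adjG 2 7) (SimpleGraph.Walk.cons (adjG 7 12) (SimpleGraph.Walk.cons (adjG 12 22) (SimpleGraph.Walk.cons (adjG 22 16) (SimpleGraph.Walk.cons (adjG 16 10) (SimpleGraph.Walk.cons (adjG 10 1) (SimpleGraph.Walk.cons (adjG 1 15) (SimpleGraph.Walk.cons (adjG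 15 5) (SimpleGraph.Walk.cons (adjG 5 4) (SimpleGraph.Walk.cons (adjG 4 9) (SimpleGraph.Walk.cons (adjG 9 0) SimpleGraph.Walk.nil))))))))))))))))

lemma w16_cycle : w16.IsCycle := by
  rw [SimpleGraph.Walk.isCycle_def]
  refine ⟨?_, by simp [w16], by decide⟩
  rw [SimpleGraph.Walk.isTrail_def]
  decide

lemma w16_length : w16.length = 16 := rfl

def f17 : Fin 17 → Fin 24 := ![23, 5, 15, 10, 16, 22, 7, 2, 18, 20, 21, 13, 8, 14, 6, 0, 9]

def emb17 : SimpleGraph.pathGraph 17 ↪g G where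
  toFun := f17
  inj' := by decide
  map_rel_iff' := by
    intro a b
    show G.Adj (f17 a) (f17 b) ↔ _
    rw [SimpleGraph.pathGraph_adj]
    revert a b
    decide

end Markstrom

/-- There exists a `3`-regular simple graph on `24` vertices with no `4`-cycle and
no `8`-cycle but with a `16`-cycle; moreover it is `P₁₈`-free and contains an
induced `P₁₇`. (The Markström graph is such a graph.) -/
theorem exists_markstrom_like_graph :
    ∃ G : SimpleGraph (Fin 24),
      (∀ v, (G.neighborSet v).ncard = 3) ∧
      (¬ ∃ (v : Fin 24) (w : G.Walk v v), w.IsCycle ∧ w.length = 4) ∧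
      (¬ ∃ (v : Fin 24) (w : G.Walk v v), w.IsCycle ∧ w.length = 8) ∧
      (∃ (v : Fin 24) (w : G.Walk v v), w.IsCycle ∧ w.length = 16) ∧
      ¬ Nonempty (SimpleGraph.pathGraph 18 ↪g G) ∧
      Nonempty (SimpleGraph.pathGraph 17 ↪g G) := by
  refine ⟨Markstrom.G, ?_, ?_, ?_, ?_, ?_, ⟨Markstrom.emb17⟩⟩
  · intro v
    rw [Set.ncard_eq_toFinset_card']
    exact Markstrom.degree3 v
  · exact Markstrom.no_cycle Markstrom.cycFree3
  · exact Markstrom.no_cycle Markstrom.cycFree7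
  · exact ⟨0, Markstrom.w16, Markstrom.w16_cycle, Markstrom.w16_length⟩
  · exact Markstrom.no_P18 Markstrom.ipaths17
end
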